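/- Let 0 < L < H and let n_H, n_L be nonnegative integers. With λ(L) = H/(2H−L), λ(H) = 1, p(L) = L·H/(2H−L), p(H) = H·(1 − H/(2H−L)) + L·H/(2H−L), the total revenue n_H·p(H) + n_L·p(L) equals (n_H·H + n_L·L)·H/(2H−L). In particular this lottery is a ((2H−L)/H)-approximation of OPT = n_H·H + n_L·L. -/

import Mathlib

/-- Two-value domain: with `λ(L) = H/(2H−L)`, `λ(H) = 1` and the associated prices,
the total revenue equals `(n_H·H + n_L·L)·H/(2H−L)`, so the lottery is a
`((2H−L)/H)`-approximation of `OPT = n_H·H + n_L·L`. -/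
theorem stmt_4 (L H : ℝ) (hL : 0 < L) (hLH : L < H) (nH nL : ℕ)
    (pL pH : ℝ)
    (hpL : pL = L * (H / (2 * H - L)))
    (hpH : pH = H * (1 - H / (2 * H - L)) + L * (H / (2 * H - L))) :
    (nH : ℝ) * pH + (nL : ℝ) * pL = ((nH : ℝ) * H + (nL : ℝ) * L) * H / (2 * H - L) ∧
    (nH : ℝ) * pH + (nL : ℝ) * pL ≥ ((nH : ℝ) * H + (nL : ℝ) * L) / ((2 * H - L) / H) := by
  have hd : 2 * H - L ≠ 0 := by nlinarith
  have hH : H ≠ 0 := by nlinarith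
  constructor
  · subst hpL hpH; field_simp [show H * 2 - L ≠ 0 by rwa [mul_comm]]; ring
  · subst hpL hpH; rw [div_div_eq_mul_div]; apply le_of_eq; field_simp [show H * 2 - L ≠ 0 by rwa [mul_comm]]; ring
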